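/- For sampling M seats with replacement where seat occupant is participant i with probability f(w_i)/Σ_j f(w_j) and all seats carry equal voting weight, fairness (expected voting power of each participant equal to its weight for all weight vectors and all splittings) holds if and only if f is linear, i.e., f(w) = c·w for some c > 0. In particular, the splitting condition f(w) = f(xw) + f((1−x)w) for all w > 0, x ∈ (0,1) together with monotonicity implies f is linear. -/

import Mathlib

lemma add_to_lin (f : ℝ → ℝ) (hmono : MonotoneOn f (Set.Ioi (0:ℝ)))
    (hc : 0 < f 1)
    (hadd : ∀ a > (0:ℝ), ∀ b > (0:ℝ), f (a + b) = f a + f b) :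
    ∀ w > (0:ℝ), f w = f 1 * w := by
  have hnat : ∀ n : ℕ, 0 < n → ∀ w > (0:ℝ), f (n * w) = n * f w := by
    intro n hn
    induction n with
    | zero => omega
    | succ m ih =>
      intro w hw
      rcases Nat.eq_zero_or_pos m with hm | hm
      · subst hm; norm_num
      · have h1 : ((m+1:ℕ):ℝ) * w = (m:ℕ) * w + w := by push_cast; ring
        have hmw : (0:ℝ) < (m:ℕ) * w := by positivity
        rw [h1, hadd _ hmw _ hw, ih hm w hw]
        push_cast; ring
  have hrat : ∀ q : ℚ, 0 < q → ∀ w > (0:ℝ), f ((q:ℝ) * w) = (q:ℝ) * f w := by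
    intro q hq w hw
    set p := q.num.toNat with hp
    have hpnum : (p:ℤ) = q.num := Int.toNat_of_nonneg (le_of_lt (Rat.num_pos.mpr hq))
    have hppos : 0 < p := by
      have := Rat.num_pos.mpr hq; omega
    have hdpos : 0 < q.den := q.pos
    have hqc : (q:ℝ) = (p:ℝ) / (q.den:ℝ) := by
      rw [Rat.cast_def]
      congr 1
      exact_mod_cast (congrArg (fun z : ℤ => (z:ℝ)) hpnum).symm
    have hqw : (0:ℝ) < (q:ℝ) * w := by positivity
    have h1 : f ((q.den:ℝ) * ((q:ℝ) * w)) = (q.den:ℝ) * f ((q:ℝ) * w) :=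
      hnat q.den hdpos _ hqw
    have h2 : (q.den:ℝ) * ((q:ℝ) * w) = (p:ℝ) * w := by
      rw [hqc]; field_simp
    rw [h2, hnat p hppos w hw] at h1
    have hdne : ((q.den:ℝ)) ≠ 0 := by positivity
    have hdq : (q.den:ℝ) * (q:ℝ) = (p:ℝ) := by rw [hqc]; field_simp
    apply mul_left_cancel₀ hdne
    rw [← h1, ← mul_assoc, hdq]
  have key : ∀ w > (0:ℝ), f w = f 1 * w := by
    intro w hw
    have hup : ∀ ε > (0:ℝ), f w ≤ f 1 * w + ε := by
      intro ε hε
      obtain ⟨r, hr1, hr2⟩ := exists_rat_btwn (show w < w + ε / f 1 by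
        have : 0 < ε / f 1 := div_pos hε hc; linarith)
      have hr0 : (0:ℝ) < (r:ℝ) := lt_trans hw hr1
      have hq0 : (0:ℚ) < r := by exact_mod_cast hr0
      have := hmono (Set.mem_Ioi.mpr hw) (Set.mem_Ioi.mpr hr0) (le_of_lt hr1)
      have hfr : f (r:ℝ) = (r:ℝ) * f 1 := by
        have := hrat r hq0 1 one_pos; simpa using this
      have : f w ≤ (r:ℝ) * f 1 := by rw [← hfr]; exact this
      calc f w ≤ (r:ℝ) * f 1 := this
        _ ≤ (w + ε / f 1) * f 1 := by nlinarith
        _ = f 1 * w + ε := by field_simp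
    have hdown : ∀ ε > (0:ℝ), f 1 * w ≤ f w + ε := by
      intro ε hε
      have hlt : max 0 (w - ε / f 1) < w := by
        apply max_lt hw; have : 0 < ε / f 1 := by positivity
        linarith
      obtain ⟨r, hr1, hr2⟩ := exists_rat_btwn hlt
      have hr0 : (0:ℝ) < (r:ℝ) := lt_of_le_of_lt (le_max_left _ _) hr1
      have hq0 : (0:ℚ) < r := by exact_mod_cast hr0
      have hmle := hmono (Set.mem_Ioi.mpr hr0) (Set.mem_Ioi.mpr hw) (le_of_lt hr2)
      have hfr : f (r:ℝ) = (r:ℝ) * f 1 := by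
        have := hrat r hq0 1 one_pos; simpa using this
      have hrb : w - ε / f 1 < (r:ℝ) := lt_of_le_of_lt (le_max_right _ _) hr1
      have : (w - ε / f 1) * f 1 ≤ f w := by
        calc (w - ε / f 1) * f 1 ≤ (r:ℝ) * f 1 := by nlinarith
          _ = f (r:ℝ) := hfr.symm
          _ ≤ f w := hmle
      have hexp : (w - ε / f 1) * f 1 = f 1 * w - ε := by field_simp
      linarith [hexp ▸ this]
    have h1 : f w ≤ f 1 * w := le_of_forall_pos_le_add hup
    have h2 : f 1 * w ≤ f w := le_of_forall_pos_le_add hdown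
    linarith
  exact key

/-- for sampling with replacement with selection probabilities
f(w_i)/Σ_j f(w_j) and equal seat weights (so participant i's expected voting power is
f(w_i)/Σ_j f(w_j)), fairness over all weight configurations (hence all splittings) holds
iff f is linear; and the splitting identity f(w) = f(xw) + f((1−x)w) together with
monotonicity already implies f is linear. -/
theorem stmt_18 (f : ℝ → ℝ) (hfpos : ∀ w > (0:ℝ), 0 < f w)
    (hmono : MonotoneOn f (Set.Ioi (0:ℝ))) :
    ((∀ (n : ℕ), 0 < n → ∀ w : Fin n → ℝ, (∀ i, 0 < w i) →
        ∀ i, f (w i) / ∑ j, f (w j) = w i / ∑ j, w j) ↔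
      ∃ c > (0:ℝ), ∀ w > (0:ℝ), f w = c * w) ∧
    ((∀ w > (0:ℝ), ∀ x ∈ Set.Ioo (0:ℝ) 1, f w = f (x * w) + f ((1 - x) * w)) →
      ∃ c > (0:ℝ), ∀ w > (0:ℝ), f w = c * w) := by
  have hf1 : 0 < f 1 := hfpos 1 one_pos
  constructor
  · constructor
    · intro h
      refine ⟨f 1, hf1, ?_⟩
      intro a ha
      have h2 := h 2 (by norm_num) ![a, 1] (by
        intro i; fin_cases i <;> simp [ha]) 0
      simp [Fin.sum_univ_two] at h2
      have hfa : 0 < f a := hfpos a ha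
      have hd1 : 0 < f a + f 1 := by linarith
      have hd2 : 0 < a + 1 := by linarith
      rw [div_eq_div_iff (ne_of_gt hd1) (ne_of_gt hd2)] at h2
      nlinarith [h2]
    · rintro ⟨c, hcpos, hlin⟩ n hn w hw i
      have : Nonempty (Fin n) := ⟨⟨0, hn⟩⟩
      have hs : ∑ j, f (w j) = c * ∑ j, w j := by
        rw [Finset.mul_sum]
        exact Finset.sum_congr rfl fun j _ => hlin _ (hw j)
      rw [hlin _ (hw i), hs, mul_div_mul_left _ _ (ne_of_gt hcpos)]
  · intro h
    refine ⟨f 1, hf1, fun w hw => ?_⟩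
    apply add_to_lin f hmono hf1 _ w hw
    intro a ha b hb
    have hab : (0:ℝ) < a + b := by linarith
    have hx : a / (a + b) ∈ Set.Ioo (0:ℝ) 1 := by
      constructor
      · positivity
      · rw [div_lt_one hab]; linarith
    have := h (a + b) hab (a / (a + b)) hx
    have e1 : a / (a + b) * (a + b) = a := by field_simp
    have e2 : (1 - a / (a + b)) * (a + b) = b := by field_simp; ring
    rw [e1, e2] at this
    exact this
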